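/- In the setting of the Kan-extension isomorphism (Φ : I × A → A with I, A small; extensions Φ_{K₁,T₁} : J₁ × B₁ → B₁ and Φ_{K₂,T₂} : J₂ × B₂ → B₂; H : J₂ → J₁ fully faithful; adjunction (L ⊣ R, η, ε) with L : B₁ → B₂, R : B₂ → B₁, L∘T₁ = T₂ and K₁ = H∘K₂), for each object j of J₂ there is an equivalence of categories Alg(Φ_{K₁,T₁}(H(j), −))|Fix_η(B₁) ≃ Alg(Φ_{K₂,T₂}(j, −))|Fix_ε(B₂), whose functors are induced by the adjunction L ⊣ R. -/

import Mathlib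

/-!
STATEMENT 14: In the setting of the Kan-extension isomorphism (`Φ : I × A → A` with `I`, `A`
small; pointwise extensions `Φ_{K₁,T₁} : J₁ × B₁ → B₁` and `Φ_{K₂,T₂} : J₂ × B₂ → B₂`;
`H : J₂ → J₁` fully faithful; adjunction `(L ⊣ R, η, ε)` with `L : B₁ → B₂`, `R : B₂ → B₁`,
`L∘T₁ = T₂`, `K₁ = H∘K₂`), for each object `j` of `J₂` there is an equivalence of categories
`Alg(Φ_{K₁,T₁}(H(j), −))|Fix_η(B₁) ≃ Alg(Φ_{K₂,T₂}(j, −))|Fix_ε(B₂)` whose functors are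
induced by the adjunction `L ⊣ R` (they act as `L` and `R` on the carriers).
-/

open CategoryTheory

universe u₁ u₂ v₃ u₃ v₄ u₄ v₅ u₅ v₆ u₆

/-- The restriction of the category of `Φ`-algebras to the full subcategory given by `P`. -/
abbrev AlgSub {E : Type u₅} [Category.{v₅} E] (Φ : E ⥤ E) (P : E → Prop) :=
  ObjectProperty.FullSubcategory (fun A : Endofunctor.Algebra Φ => P A.a)

section AUX
open CategoryTheory.Limits



namespace Stmt14Aux

variable {B₁ : Type u₅} [Category.{v₅} B₁] {B₂ : Type u₆} [Category.{v₆} B₂]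
  {L : B₁ ⥤ B₂} {R : B₂ ⥤ B₁} (adj : L ⊣ R)

theorem counitIso_of_unitIso (X : B₁) (hX : IsIso (adj.unit.app X)) :
    IsIso (adj.counit.app (L.obj X)) := by
  haveI := hX
  rw [← IsIso.inv_eq_of_hom_inv_id (adj.left_triangle_components X)]; infer_instance

theorem unitIso_of_counitIso (Y : B₂) (hY : IsIso (adj.counit.app Y)) :
    IsIso (adj.unit.app (R.obj Y)) := by
  haveI := hY
  rw [← IsIso.inv_eq_of_inv_hom_id (adj.right_triangle_components Y)]; infer_instance

variable {Ψ₁ : B₁ ⥤ B₁} {Ψ₂ : B₂ ⥤ B₂}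
  (θ : ∀ X : B₁, IsIso (adj.unit.app X) → (L.obj (Ψ₁.obj X) ≅ Ψ₂.obj (L.obj X)))
  (θnat : ∀ {X X' : B₁} (hX : IsIso (adj.unit.app X)) (hX' : IsIso (adj.unit.app X'))
    (f : X ⟶ X'),
    (θ X hX).hom ≫ Ψ₂.map (L.map f) = L.map (Ψ₁.map f) ≫ (θ X' hX').hom)

/-- The forward functor. -/
@[simps]
def Fct (θnat : ∀ {X X' : B₁} (hX : IsIso (adj.unit.app X)) (hX' : IsIso (adj.unit.app X'))
      (f : X ⟶ X'),
      (θ X hX).hom ≫ Ψ₂.map (L.map f) = L.map (Ψ₁.map f) ≫ (θ X' hX').hom) : AlgSub Ψ₁ (fun X => IsIso (adj.unit.app X)) ⥤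
    AlgSub Ψ₂ (fun Y => IsIso (adj.counit.app Y)) where
  obj A := ⟨⟨L.obj A.obj.a, (θ A.obj.a A.property).inv ≫ L.map A.obj.str⟩,
    counitIso_of_unitIso adj _ A.property⟩
  map {A B} f :=
   ⟨{ f := L.map f.hom.f
      h := by
        dsimp only
        have h2 : Ψ₂.map (L.map f.hom.f) ≫ (θ B.obj.a B.property).inv =
            (θ A.obj.a A.property).inv ≫ L.map (Ψ₁.map f.hom.f) := by
          rw [Iso.comp_inv_eq, Category.assoc, ← θnat A.property B.property f.hom.f,
            Iso.inv_hom_id_assoc]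
        rw [← Category.assoc, h2]
        simp only [Category.assoc, ← L.map_comp, f.hom.h] }⟩
  map_id A := by
    apply ObjectProperty.hom_ext; apply Endofunctor.Algebra.ext; show L.map (𝟙 _) = 𝟙 _; simp
  map_comp f g := by
    apply ObjectProperty.hom_ext; apply Endofunctor.Algebra.ext; show L.map (f.hom.f ≫ g.hom.f) = L.map f.hom.f ≫ L.map g.hom.f; simp

/-- The backward functor. -/
@[simps]
def Gct (θnat : ∀ {X X' : B₁} (hX : IsIso (adj.unit.app X)) (hX' : IsIso (adj.unit.app X'))
      (f : X ⟶ X'),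
      (θ X hX).hom ≫ Ψ₂.map (L.map f) = L.map (Ψ₁.map f) ≫ (θ X' hX').hom) : AlgSub Ψ₂ (fun Y => IsIso (adj.counit.app Y)) ⥤
    AlgSub Ψ₁ (fun X => IsIso (adj.unit.app X)) where
  obj B := ⟨⟨R.obj B.obj.a,
      adj.unit.app _ ≫ R.map ((θ _ (unitIso_of_counitIso adj _ B.property)).hom ≫
        Ψ₂.map (adj.counit.app B.obj.a) ≫ B.obj.str)⟩,
    unitIso_of_counitIso adj _ B.property⟩
  map {B B'} g :=
   ⟨{ f := R.map g.hom.f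
      h := by
        dsimp only
        rw [← adj.unit_naturality_assoc (Ψ₁.map (R.map g.hom.f))]
        simp only [Category.assoc, ← R.map_comp]
        congr 2
        rw [← Category.assoc, ← θnat (unitIso_of_counitIso adj _ B.property)
          (unitIso_of_counitIso adj _ B'.property) (R.map g.hom.f), Category.assoc,
          ← Ψ₂.map_comp_assoc, adj.counit_naturality g.hom.f, Ψ₂.map_comp_assoc]
        simp [g.hom.h] }⟩
  map_id B := by
    apply ObjectProperty.hom_ext; apply Endofunctor.Algebra.ext; show R.map (𝟙 _) = 𝟙 _; simp
  map_comp f g := by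
    apply ObjectProperty.hom_ext; apply Endofunctor.Algebra.ext; show R.map (f.hom.f ≫ g.hom.f) = R.map f.hom.f ≫ R.map g.hom.f; simp

end Stmt14Aux

namespace Stmt14Aux

variable {B₁ : Type u₅} [Category.{v₅} B₁] {B₂ : Type u₆} [Category.{v₆} B₂]
  {L : B₁ ⥤ B₂} {R : B₂ ⥤ B₁} (adj : L ⊣ R)
  {Ψ₁ : B₁ ⥤ B₁} {Ψ₂ : B₂ ⥤ B₂}
  (θ : ∀ X : B₁, IsIso (adj.unit.app X) → (L.obj (Ψ₁.obj X) ≅ Ψ₂.obj (L.obj X)))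
  (θnat : ∀ {X X' : B₁} (hX : IsIso (adj.unit.app X)) (hX' : IsIso (adj.unit.app X'))
    (f : X ⟶ X'),
    (θ X hX).hom ≫ Ψ₂.map (L.map f) = L.map (Ψ₁.map f) ≫ (θ X' hX').hom)

/-- Build an isomorphism in `AlgSub` from a morphism whose underlying map is iso. -/
noncomputable def mkAlgSubIso {E : Type*} [Category E] {Ξ : E ⥤ E} {P : E → Prop}
    {A B : AlgSub Ξ P} (f : A ⟶ B) (hf : IsIso f.hom.f) : A ≅ B := by
  haveI := hf
  refine ⟨f, ⟨⟨inv f.hom.f, ?_⟩⟩, ?_, ?_⟩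
  · rw [Functor.map_inv, IsIso.inv_comp_eq, ← Category.assoc, f.hom.h, Category.assoc,
      IsIso.hom_inv_id, Category.comp_id]
  · apply ObjectProperty.hom_ext; apply Endofunctor.Algebra.ext; show f.hom.f ≫ inv f.hom.f = 𝟙 _; simp
  · apply ObjectProperty.hom_ext; apply Endofunctor.Algebra.ext; show inv f.hom.f ≫ f.hom.f = 𝟙 _; simp

/-- The unit isomorphism. -/
noncomputable def unitIso : 𝟭 _ ≅ Fct adj θ θnat ⋙ Gct adj θ θnat :=
  NatIso.ofComponents
    (fun A => mkAlgSubIso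
     ⟨{ f := adj.unit.app A.obj.a
        h := by
          dsimp only [Fct, Gct, Functor.comp_obj]
          have hnav := adj.unit_naturality (Ψ₁.map (adj.unit.app A.obj.a))
          dsimp at hnav
          rw [← Category.assoc, ← hnav]
          simp only [Category.assoc, ← R.map_comp]
          have hθ := θnat A.property
            (unitIso_of_counitIso adj _ (counitIso_of_unitIso adj _ A.property))
            (adj.unit.app A.obj.a)
          dsimp at hθ
          rw [← Category.assoc (L.map _), ← hθ, Category.assoc, ← Ψ₂.map_comp_assoc, adj.left_triangle_components,
            Ψ₂.map_id, Category.id_comp, Iso.hom_inv_id_assoc, adj.unit_naturality A.obj.str]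
          rfl }⟩
      A.property)
    (fun {A A'} f => by
      apply ObjectProperty.hom_ext
      apply Endofunctor.Algebra.ext
      show f.hom.f ≫ adj.unit.app _ = adj.unit.app _ ≫ R.map (L.map f.hom.f)
      rw [← adj.unit_naturality f.hom.f])

/-- The counit isomorphism. -/
noncomputable def counitIso : Gct adj θ θnat ⋙ Fct adj θ θnat ≅ 𝟭 _ :=
  NatIso.ofComponents
    (fun B => mkAlgSubIso
     ⟨{ f := adj.counit.app B.obj.a
        h := by
          dsimp only [Fct, Gct, Functor.comp_obj, Functor.id_obj]
          simp }⟩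
      B.property)
    (fun {B B'} g => by
      apply ObjectProperty.hom_ext
      apply Endofunctor.Algebra.ext
      show L.map (R.map g.hom.f) ≫ adj.counit.app _ = adj.counit.app _ ≫ g.hom.f
      rw [adj.counit_naturality g.hom.f])

end Stmt14Aux



namespace Stmt14Aux

section Kan

variable {I : Type u₁} [SmallCategory I] {A : Type u₂} [SmallCategory A]
  {J₁ : Type u₃} [Category.{v₃} J₁] {J₂ : Type u₄} [Category.{v₄} J₂]
  {B₁ : Type u₅} [Category.{v₅} B₁] {B₂ : Type u₆} [Category.{v₆} B₂]
  (K₂ : I ⥤ J₂) (T₁ : A ⥤ B₁)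
  (H : J₂ ⥤ J₁) [H.Full] [H.Faithful]
  {L : B₁ ⥤ B₂} {R : B₂ ⥤ B₁} (adj : L ⊣ R)
  (j : J₂) (X : B₁)

/-- The comparison functor between comma categories. -/
@[simps]
noncomputable def cmp : CostructuredArrow ((K₂ ⋙ H).prod T₁) (H.obj j, X) ⥤
    CostructuredArrow (K₂.prod (T₁ ⋙ L)) (j, L.obj X) where
  obj k := CostructuredArrow.mk
    (Y := k.left)
    ((H.preimage k.hom.1, L.map k.hom.2) :
      (K₂.prod (T₁ ⋙ L)).obj k.left ⟶ (j, L.obj X))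
  map {k k'} m := CostructuredArrow.homMk m.left (by
    have w1 := congrArg Prod.fst (CostructuredArrow.w m)
    have w2 := congrArg Prod.snd (CostructuredArrow.w m)
    dsimp at w1 w2 ⊢
    refine Prod.ext ?_ ?_
    · apply H.map_injective
      simp [w1]
    · dsimp
      rw [← L.map_comp, w2])
  map_id k := by apply CostructuredArrow.hom_ext; simp
  map_comp f g := by apply CostructuredArrow.hom_ext; simp

theorem L_map_injective (hX : IsIso (adj.unit.app X)) {W : B₁} (g g' : W ⟶ X)
    (h : L.map g = L.map g') : g = g' := by
  haveI := hX
  have h1 : g ≫ adj.unit.app X = g' ≫ adj.unit.app X := by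
    rw [← adj.unit_naturality, ← adj.unit_naturality, h]
  exact (cancel_mono (adj.unit.app X)).mp h1

theorem L_map_section (hX : IsIso (adj.unit.app X)) {W : B₁} (g' : L.obj W ⟶ L.obj X) :
    L.map ((adj.homEquiv W (L.obj X)) g' ≫ inv (adj.unit.app X)) = g' := by
  haveI := hX
  rw [L.map_comp, L.map_inv, IsIso.inv_eq_of_hom_inv_id (adj.left_triangle_components X),
    Adjunction.homEquiv_unit, L.map_comp, Category.assoc]
  simp

theorem cmp_faithful (_hX : IsIso (adj.unit.app X)) : (cmp K₂ T₁ H j X (L := L)).Faithful := by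
  constructor
  intro k k' m m' h
  apply CostructuredArrow.hom_ext
  have := congrArg CommaMorphism.left h
  exact this

theorem cmp_full (hX : IsIso (adj.unit.app X)) : (cmp K₂ T₁ H j X (L := L)).Full := by
  constructor
  intro k k' v
  have w1 := congrArg Prod.fst (CostructuredArrow.w v)
  have w2 := congrArg Prod.snd (CostructuredArrow.w v)
  dsimp [cmp] at w1 w2
  refine ⟨CostructuredArrow.homMk v.left ?_, ?_⟩
  · refine Prod.ext ?_ ?_
    · dsimp
      conv_rhs => rw [← H.map_preimage k.hom.1, ← w1]
      rw [H.map_comp, H.map_preimage]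
      rfl
    · dsimp
      apply L_map_injective adj X hX
      rw [L.map_comp]
      exact w2
  · apply CostructuredArrow.hom_ext
    rfl

theorem cmp_essSurj (hX : IsIso (adj.unit.app X)) : (cmp K₂ T₁ H j X (L := L)).EssSurj := by
  constructor
  intro k₂
  refine ⟨CostructuredArrow.mk
    (Y := k₂.left)
    ((H.map k₂.hom.1, (adj.homEquiv _ _) k₂.hom.2 ≫ inv (adj.unit.app X)) :
      ((K₂ ⋙ H).prod T₁).obj k₂.left ⟶ (H.obj j, X)), ⟨?_⟩⟩
  refine CostructuredArrow.isoMk (Iso.refl _) ?_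
  dsimp
  refine Prod.ext ?_ ?_
  · show K₂.map (𝟙 _) ≫ k₂.hom.1 = H.preimage (H.map k₂.hom.1)
    simp
  · show L.map (T₁.map (𝟙 _)) ≫ k₂.hom.2 = L.map ((adj.homEquiv _ _) k₂.hom.2 ≫ inv (adj.unit.app X))
    simp [L_map_section adj X hX]


section KanExt

variable (Φ : I × A ⥤ A)
  (E₁ : J₁ × B₁ ⥤ B₁) (u₁ : Φ ⋙ T₁ ⟶ ((K₂ ⋙ H).prod T₁) ⋙ E₁)
  (hE₁ : (Functor.LeftExtension.mk E₁ u₁).IsPointwiseLeftKanExtension)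
  (E₂ : J₂ × B₂ ⥤ B₂) (u₂ : Φ ⋙ (T₁ ⋙ L) ⟶ (K₂.prod (T₁ ⋙ L)) ⋙ E₂)
  (hE₂ : (Functor.LeftExtension.mk E₂ u₂).IsPointwiseLeftKanExtension)

/-- Identification of the two diagrams. -/
noncomputable def diagIso :
    ((CostructuredArrow.proj ((K₂ ⋙ H).prod T₁) (H.obj j, X) ⋙ (Φ ⋙ T₁)) ⋙ L) ≅
      cmp K₂ T₁ H j X ⋙
        (CostructuredArrow.proj (K₂.prod (T₁ ⋙ L)) (j, L.obj X) ⋙ (Φ ⋙ (T₁ ⋙ L))) :=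
  NatIso.ofComponents (fun k => Iso.refl _) (by
    intros k k' m
    dsimp [cmp]
    exact (Category.comp_id _).trans (Category.id_comp _).symm)

/-- The mapped colimit cocone. -/
noncomputable def c1L :
    IsColimit (L.mapCocone ((Functor.LeftExtension.mk E₁ u₁).coconeAt (H.obj j, X))) :=
  letI := adj.leftAdjoint_preservesColimits
  isColimitOfPreserves L (hE₁ (H.obj j, X))

/-- The transported colimit cocone. -/
noncomputable def c2w (hX : IsIso (adj.unit.app X)) :
    IsColimit ((Cocone.precompose (diagIso K₂ T₁ H j X Φ).hom).obj
      (((Functor.LeftExtension.mk E₂ u₂).coconeAt (j, L.obj X)).whisker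
        (cmp K₂ T₁ H j X))) :=
  haveI := cmp_full K₂ T₁ H adj j X hX
  haveI := cmp_faithful K₂ T₁ H adj j X hX
  haveI := cmp_essSurj K₂ T₁ H adj j X hX
  haveI : (cmp K₂ T₁ H j X (L := L)).IsEquivalence := {}
  (IsColimit.precomposeHomEquiv (diagIso K₂ T₁ H j X Φ) _).symm
    ((Functor.Final.isColimitWhiskerEquiv (cmp K₂ T₁ H j X) _).symm (hE₂ (j, L.obj X)))

/-- The comparison isomorphism. -/
noncomputable def θiso (hX : IsIso (adj.unit.app X)) :
    L.obj (E₁.obj (H.obj j, X)) ≅ E₂.obj (j, L.obj X) :=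
  (c1L K₂ T₁ H adj j X Φ E₁ u₁ hE₁).coconePointUniqueUpToIso
    (c2w K₂ T₁ H adj j X Φ E₂ u₂ hE₂ hX)

theorem θiso_fac (hX : IsIso (adj.unit.app X))
    (k : CostructuredArrow ((K₂ ⋙ H).prod T₁) (H.obj j, X)) :
    L.map (u₁.app k.left ≫ E₁.map k.hom) ≫ (θiso K₂ T₁ H adj j X Φ E₁ u₁ hE₁ E₂ u₂ hE₂ hX).hom =
      u₂.app k.left ≫ E₂.map (((cmp K₂ T₁ H j X).obj k).hom) := by
  have h := IsColimit.comp_coconePointUniqueUpToIso_hom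
    (c1L K₂ T₁ H adj j X Φ E₁ u₁ hE₁) (c2w K₂ T₁ H adj j X Φ E₂ u₂ hE₂ hX) k
  dsimp [diagIso] at h
  refine Eq.trans ?_ (h.trans ?_)
  · rfl
  · exact Category.id_comp _

theorem θiso_nat {X' : B₁} (hX : IsIso (adj.unit.app X)) (hX' : IsIso (adj.unit.app X'))
    (f : X ⟶ X') :
    (θiso K₂ T₁ H adj j X Φ E₁ u₁ hE₁ E₂ u₂ hE₂ hX).hom ≫ E₂.map (𝟙 j, L.map f) =
      L.map (E₁.map (𝟙 (H.obj j), f)) ≫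
        (θiso K₂ T₁ H adj j X' Φ E₁ u₁ hE₁ E₂ u₂ hE₂ hX').hom := by
  apply (c1L K₂ T₁ H adj j X Φ E₁ u₁ hE₁).hom_ext
  intro k
  have h1 := θiso_fac K₂ T₁ H adj j X Φ E₁ u₁ hE₁ E₂ u₂ hE₂ hX k
  have h2 := θiso_fac K₂ T₁ H adj j X' Φ E₁ u₁ hE₁ E₂ u₂ hE₂ hX'
    (CostructuredArrow.mk (Y := k.left)
      (k.hom ≫ (show ((H.obj j, X) : J₁ × B₁) ⟶ (H.obj j, X') from (𝟙 (H.obj j), f))))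
  have h3 : ∀ (g : ((H.obj j, X) : J₁ × B₁) ⟶ (H.obj j, X')),
      L.map (u₁.app k.left ≫ E₁.map k.hom) ≫ L.map (E₁.map g) =
        L.map (u₁.app k.left ≫ E₁.map (k.hom ≫ g)) := by
    intro g
    rw [← L.map_comp, Category.assoc, ← E₁.map_comp]
  dsimp [cmp] at h1 h2 ⊢
  change L.map (u₁.app k.left ≫ E₁.map k.hom) ≫ _ = L.map (u₁.app k.left ≫ E₁.map k.hom) ≫ _
  rw [reassoc_of% h1, ← E₂.map_comp]
  rw [← Category.assoc, h3 ((𝟙 (H.obj j), f))]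
  simp only [prod_comp, Category.comp_id, Category.id_comp] at h2 ⊢
  rw [h2]
  simp only [← L.map_comp]

end KanExt


end Kan

end Stmt14Aux


end AUX

theorem stmt14
    {I : Type u₁} [SmallCategory I] {A : Type u₂} [SmallCategory A]
    {J₁ : Type u₃} [Category.{v₃} J₁] {J₂ : Type u₄} [Category.{v₄} J₂]
    {B₁ : Type u₅} [Category.{v₅} B₁] [Limits.HasColimits B₁]
    {B₂ : Type u₆} [Category.{v₆} B₂] [Limits.HasColimits B₂]
    (Φ : I × A ⥤ A)
    (K₁ : I ⥤ J₁) (K₂ : I ⥤ J₂) (T₁ : A ⥤ B₁) (T₂ : A ⥤ B₂)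
    (E₁ : J₁ × B₁ ⥤ B₁) (u₁ : Φ ⋙ T₁ ⟶ (K₁.prod T₁) ⋙ E₁)
    (hE₁ : (Functor.LeftExtension.mk E₁ u₁).IsPointwiseLeftKanExtension)
    (E₂ : J₂ × B₂ ⥤ B₂) (u₂ : Φ ⋙ T₂ ⟶ (K₂.prod T₂) ⋙ E₂)
    (hE₂ : (Functor.LeftExtension.mk E₂ u₂).IsPointwiseLeftKanExtension)
    (H : J₂ ⥤ J₁) [H.Full] [H.Faithful]
    (L : B₁ ⥤ B₂) (R : B₂ ⥤ B₁) (adj : L ⊣ R)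
    (hT : T₁ ⋙ L = T₂) (hK : K₂ ⋙ H = K₁) :
    ∀ j : J₂,
      ∃ e : Equivalence
          (AlgSub ((Functor.curry.obj E₁).obj (H.obj j)) (fun X : B₁ => IsIso (adj.unit.app X)))
          (AlgSub ((Functor.curry.obj E₂).obj j) (fun Y : B₂ => IsIso (adj.counit.app Y))),
        (∀ A', (e.functor.obj A').obj.a = L.obj A'.obj.a) ∧
        (∀ B', (e.inverse.obj B').obj.a = R.obj B'.obj.a) := by
  subst hT
  subst hK
  intro j
  let θ : ∀ X : B₁, IsIso (adj.unit.app X) →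
      (L.obj (((Functor.curry.obj E₁).obj (H.obj j)).obj X) ≅ ((Functor.curry.obj E₂).obj j).obj (L.obj X)) :=
    fun X hX => Stmt14Aux.θiso K₂ T₁ H adj j X Φ E₁ u₁ hE₁ E₂ u₂ hE₂ hX
  have θnat : ∀ {X X' : B₁} (hX : IsIso (adj.unit.app X)) (hX' : IsIso (adj.unit.app X'))
      (f : X ⟶ X'), (θ X hX).hom ≫ ((Functor.curry.obj E₂).obj j).map (L.map f) =
        L.map (((Functor.curry.obj E₁).obj (H.obj j)).map f) ≫ (θ X' hX').hom := by
    intro X X' hX hX' f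
    exact Stmt14Aux.θiso_nat K₂ T₁ H adj j X Φ E₁ u₁ hE₁ E₂ u₂ hE₂ hX hX' f
  exact ⟨CategoryTheory.Equivalence.mk (Stmt14Aux.Fct adj θ θnat) (Stmt14Aux.Gct adj θ θnat)
    (Stmt14Aux.unitIso adj θ θnat) (Stmt14Aux.counitIso adj θ θnat),
    fun _ => rfl, fun _ => rfl⟩
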